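/- Let m ≥ 2 and n ≥ 0 be integers. For all real x and y: ∫_0^∞ e^{-t} H̃_n^{(m)}(x, yt) dt = e_n^{(m)}(x,y), where e_n^{(m)}(x,y) = ∑_{k=0}^{⌊n/m⌋} x^{n-mk} y^k / ((n-mk)!)². -/

import Mathlib

open MeasureTheory Set

/-- The hybrid polynomials
`H̃_n^(m)(x,y) = ∑_{k=0}^{⌊n/m⌋} x^(n-mk) y^k / (k! ((n-mk)!)²)`. -/
noncomputable def hybridHermite (m n : ℕ) (x y : ℝ) : ℝ :=
  ∑ k ∈ Finset.range (n / m + 1),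
    x ^ (n - m * k) * y ^ k / ((k.factorial : ℝ) * ((n - m * k).factorial : ℝ) ^ 2)

/-- The truncated polynomials
`e_n^(m)(x,y) = ∑_{k=0}^{⌊n/m⌋} x^(n-mk) y^k / ((n-mk)!)²`. -/
noncomputable def truncatedPoly (m n : ℕ) (x y : ℝ) : ℝ :=
  ∑ k ∈ Finset.range (n / m + 1),
    x ^ (n - m * k) * y ^ k / (((n - m * k).factorial : ℝ) ^ 2)

lemma integrable_exp_neg_mul_pow (k : ℕ) :
    IntegrableOn (fun t : ℝ => Real.exp (-t) * t ^ k) (Ioi 0) := by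
  have h := Real.GammaIntegral_convergent (s := (k : ℝ) + 1) (by positivity)
  refine h.congr_fun (fun t ht => ?_) measurableSet_Ioi
  simp only [add_sub_cancel_right]
  rw [Real.rpow_natCast]

lemma integral_exp_neg_mul_pow (k : ℕ) :
    ∫ t : ℝ in Ioi 0, Real.exp (-t) * t ^ k = (k.factorial : ℝ) := by
  have h := Real.Gamma_eq_integral (s := (k : ℝ) + 1) (by positivity)
  rw [← Real.Gamma_nat_eq_factorial, h]
  refine setIntegral_congr_fun measurableSet_Ioi (fun t ht => ?_)
  simp only [add_sub_cancel_right]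
  rw [Real.rpow_natCast]

/-- For `m ≥ 2`, `n ≥ 0` and all real `x, y`, the Borel transform (in the second
variable) of the hybrid polynomial gives the truncated polynomial:
`∫_0^∞ e^{-t} H̃_n^(m)(x, yt) dt = e_n^(m)(x,y)`. -/
theorem borel_transform_hybridHermite_snd (m n : ℕ) (hm : 2 ≤ m) (x y : ℝ) :
    ∫ t : ℝ in Ioi 0, Real.exp (-t) * hybridHermite m n x (y * t)
      = truncatedPoly m n x y := by
  unfold hybridHermite truncatedPoly
  have heq : ∀ t : ℝ, Real.exp (-t) *
      (∑ k ∈ Finset.range (n / m + 1),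
        x ^ (n - m * k) * (y * t) ^ k / ((k.factorial : ℝ) * ((n - m * k).factorial : ℝ) ^ 2))
      = ∑ k ∈ Finset.range (n / m + 1),
        (x ^ (n - m * k) * y ^ k / ((k.factorial : ℝ) * ((n - m * k).factorial : ℝ) ^ 2)) *
          (Real.exp (-t) * t ^ k) := by
    intro t
    rw [Finset.mul_sum]
    refine Finset.sum_congr rfl (fun k _ => ?_)
    rw [mul_pow]; ring
  simp only [heq]
  rw [integral_finset_sum _ (fun k _ => (integrable_exp_neg_mul_pow k).const_mul _)]
  refine Finset.sum_congr rfl (fun k _ => ?_)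
  rw [integral_const_mul, integral_exp_neg_mul_pow]
  have hk : (k.factorial : ℝ) ≠ 0 := Nat.cast_ne_zero.mpr k.factorial_ne_zero
  field_simp
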